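/- Let x_{i,k} (1 ≤ k ≤ m), x_{k,j} (1 ≤ k ≤ m), and x_{i,j} be elements of ℤ_p with i, j > m, j < i. If val_p(p x_{i,j}) ≥ val_p(Σ_{k=1}^m p x_{i,k} x_{k,j}), then (j−i)/n + val_p(Σ_{k=1}^m p x_{i,k} x_{k,j} + p x_{i,j}) ≥ min_{1≤k≤m} ((k−i)/n + val_p(p x_{i,k})). -/

import Mathlib

open scoped Classical

/-- `p`-adic valuation with values in `WithTop ℝ` (`⊤` at `0`). -/
noncomputable def valR {p : ℕ} [Fact p.Prime] (x : ℤ_[p]) : WithTop ℝ :=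
  if x = 0 then ⊤ else ((x.valuation : ℝ) : WithTop ℝ)

lemma valR_mono {p : ℕ} [Fact p.Prime] {a b : ℤ_[p]} (hb : b ≠ 0)
    (h : a = 0 ∨ (a ≠ 0 ∧ b.valuation ≤ a.valuation)) : valR b ≤ valR a := by
  rcases h with h | ⟨ha, h⟩
  · simp [valR, h]
  · simp only [valR, if_neg ha, if_neg hb]
    exact_mod_cast h

lemma min_valR_le_add {p : ℕ} [Fact p.Prime] (a b : ℤ_[p]) :
    min (valR a) (valR b) ≤ valR (a + b) := by
  rcases eq_or_ne a 0 with ha | ha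
  · rw [ha, zero_add]; exact min_le_right _ _
  rcases eq_or_ne b 0 with hb | hb
  · rw [hb, add_zero]; exact min_le_left _ _
  rcases eq_or_ne (a + b) 0 with hab | hab
  · simp [valR, hab]
  have key : min a.valuation b.valuation ≤ (a + b).valuation := by
    have hne : (a : ℚ_[p]) + (b : ℚ_[p]) ≠ 0 := by
      rw [← PadicInt.coe_add]
      exact PadicInt.coe_ne_zero.2 hab
    have := Padic.le_valuation_add hne
    zify; simpa [← PadicInt.valuation_coe] using this
  simp only [valR, if_neg ha, if_neg hb, if_neg hab]
  rw [← WithTop.coe_min]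
  exact WithTop.coe_le_coe.2 (by exact_mod_cast key)

lemma valR_le_mul {p : ℕ} [Fact p.Prime] (a b : ℤ_[p]) : valR a ≤ valR (a * b) := by
  rcases eq_or_ne (a * b) 0 with hab | hab
  · simp [valR, hab]
  have ha : a ≠ 0 := fun h => hab (by simp [h])
  have hb : b ≠ 0 := fun h => hab (by simp [h])
  apply valR_mono ha
  right
  refine ⟨hab, ?_⟩
  have hmul : ((a * b : ℤ_[p]) : ℚ_[p]).valuation = (a : ℚ_[p]).valuation + (b : ℚ_[p]).valuation := by
    rw [PadicInt.coe_mul]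
    exact Padic.valuation_mul (PadicInt.coe_ne_zero.2 ha) (PadicInt.coe_ne_zero.2 hb)
  show a.valuation ≤ (a*b).valuation
  unfold PadicInt.valuation
  rw [hmul]
  simp; omega

lemma inf_valR_le_sum {p : ℕ} [Fact p.Prime] (s : Finset ℕ) (f : ℕ → ℤ_[p]) :
    s.inf (fun k => valR (f k)) ≤ valR (∑ k ∈ s, f k) := by
  induction s using Finset.cons_induction with
  | empty => simp [valR]
  | cons a s ha ih =>
    rw [Finset.inf_cons, Finset.sum_cons]
    exact le_trans (min_le_min le_rfl ih) (min_valR_le_add _ _)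

theorem key_valuation_inequality {p : ℕ} [Fact p.Prime] (n m i j : ℕ) (hn : 2 ≤ n)
    (hm : 1 ≤ m) (hj : j = m + 1) (hji : j < i) (hin : i ≤ n)
    (u v : ℕ → ℤ_[p]) (w : ℤ_[p])
    (hyp : valR (∑ k ∈ Finset.Icc 1 m, (p : ℤ_[p]) * u k * v k) ≤ valR ((p : ℤ_[p]) * w)) :
    (Finset.Icc 1 m).inf
        (fun k => ((((k : ℝ) - (i : ℝ)) / (n : ℝ) : ℝ) : WithTop ℝ) + valR ((p : ℤ_[p]) * u k))
      ≤ ((((j : ℝ) - (i : ℝ)) / (n : ℝ) : ℝ) : WithTop ℝ) +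
          valR ((∑ k ∈ Finset.Icc 1 m, (p : ℤ_[p]) * u k * v k) + (p : ℤ_[p]) * w) := by
  set S := ∑ k ∈ Finset.Icc 1 m, (p : ℤ_[p]) * u k * v k with hS
  have hne : (Finset.Icc 1 m).Nonempty := ⟨1, by simp [hm]⟩
  obtain ⟨k₀, hk₀mem, hk₀⟩ :=
    Finset.exists_mem_eq_inf (Finset.Icc 1 m) hne (fun k => valR ((p : ℤ_[p]) * u k * v k))
  have hk₀m : k₀ ≤ m := (Finset.mem_Icc.mp hk₀mem).2
  have hnpos : (0 : ℝ) < (n : ℝ) := by positivity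
  have hc : ((((k₀ : ℝ) - (i : ℝ)) / (n : ℝ) : ℝ) : WithTop ℝ)
      ≤ ((((j : ℝ) - (i : ℝ)) / (n : ℝ) : ℝ) : WithTop ℝ) := by
    apply WithTop.coe_le_coe.2
    have hkj : (k₀ : ℝ) ≤ (j : ℝ) := by
      exact_mod_cast Nat.le_of_lt (by omega : k₀ < j)
    gcongr
  calc (Finset.Icc 1 m).inf
        (fun k => ((((k : ℝ) - (i : ℝ)) / (n : ℝ) : ℝ) : WithTop ℝ) + valR ((p : ℤ_[p]) * u k))
      ≤ ((((k₀ : ℝ) - (i : ℝ)) / (n : ℝ) : ℝ) : WithTop ℝ) + valR ((p : ℤ_[p]) * u k₀) :=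
        Finset.inf_le hk₀mem
    _ ≤ ((((j : ℝ) - (i : ℝ)) / (n : ℝ) : ℝ) : WithTop ℝ) + valR ((p : ℤ_[p]) * u k₀ * v k₀) :=
        add_le_add hc (valR_le_mul _ _)
    _ = ((((j : ℝ) - (i : ℝ)) / (n : ℝ) : ℝ) : WithTop ℝ)
          + (Finset.Icc 1 m).inf (fun k => valR ((p : ℤ_[p]) * u k * v k)) := by rw [hk₀]
    _ ≤ ((((j : ℝ) - (i : ℝ)) / (n : ℝ) : ℝ) : WithTop ℝ) + valR S :=
        add_le_add le_rfl (inf_valR_le_sum _ _)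
    _ ≤ ((((j : ℝ) - (i : ℝ)) / (n : ℝ) : ℝ) : WithTop ℝ) + valR (S + (p : ℤ_[p]) * w) := by
        apply add_le_add le_rfl
        calc valR S = min (valR S) (valR ((p : ℤ_[p]) * w)) := (min_eq_left hyp).symm
          _ ≤ valR (S + (p : ℤ_[p]) * w) := min_valR_le_add _ _
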